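/- arXiv:2104.13695 — 2 statements merged into one kernel-verified Lean document; each statement's English description precedes it below -/
import Mathlib

section
/- Let I be a finite index set, and for each i ∈ I let c_i ∈ {0,1} and let H_i : ℝ → ℝ be twice differentiable with 0 < H_i(β) < 1, (H_i'(β))² ≥ H_i''(β)·H_i(β), and (H_i'(β))² ≥ -H_i''(β)·(1 - H_i(β)) for all β ∈ ℝ. Then the negative log-likelihood β ↦ -∑_{i ∈ I} [ c_i · log(H_i(β)) + (1 - c_i) · log(1 - H_i(β)) ] is convex on ℝ. -/
/-- Convexity of `-log ∘ h` under the second-order condition. -/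
lemma neg_log_convex_aux (h : ℝ → ℝ) (hd : ∀ β, DifferentiableAt ℝ h β)
    (hd' : ∀ β, DifferentiableAt ℝ (deriv h) β)
    (hpos : ∀ β, 0 < h β)
    (hineq : ∀ β, (deriv h β) ^ 2 ≥ deriv (deriv h) β * h β) :
    ConvexOn ℝ Set.univ (fun β => -Real.log (h β)) := by
  have hne : ∀ β, h β ≠ 0 := fun β => (hpos β).ne'
  have hd1 : ∀ β, HasDerivAt (fun β => -Real.log (h β)) (-(deriv h β / h β)) β := by
    intro β
    exact ((hd β).hasDerivAt.log (hne β)).neg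
  have hderiv1 : deriv (fun β => -Real.log (h β)) = fun β => -(deriv h β / h β) :=
    funext fun β => (hd1 β).deriv
  have hd2 : ∀ β, HasDerivAt (fun β => -(deriv h β / h β))
      (-((deriv (deriv h) β * h β - deriv h β * deriv h β) / (h β) ^ 2)) β := by
    intro β
    exact (((hd' β).hasDerivAt.div (hd β).hasDerivAt (hne β))).neg
  apply convexOn_of_deriv2_nonneg convex_univ
  · exact Continuous.continuousOn
      (continuous_iff_continuousAt.mpr fun β => (hd1 β).differentiableAt.continuousAt)
  · intro β _
    exact ((hd1 β).differentiableAt).differentiableWithinAt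
  · intro β _
    rw [interior_univ] at *
    have : DifferentiableAt ℝ (deriv (fun β => -Real.log (h β))) β := by
      rw [hderiv1]
      exact (hd2 β).differentiableAt
    exact this.differentiableWithinAt
  · intro β _
    have : deriv^[2] (fun β => -Real.log (h β)) β
        = -((deriv (deriv h) β * h β - deriv h β * deriv h β) / (h β) ^ 2) := by
      show deriv (deriv (fun β => -Real.log (h β))) β = _
      rw [hderiv1]
      exact (hd2 β).deriv
    rw [this]
    have h1 : deriv (deriv h) β * h β - deriv h β * deriv h β ≤ 0 := by
      have := hineq β
      nlinarith [sq_nonneg (deriv h β)]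
    have h2 : (0:ℝ) < (h β) ^ 2 := pow_pos (hpos β) 2
    have := div_nonpos_of_nonpos_of_nonneg h1 h2.le
    linarith

lemma sum_convexOn {ι : Type*} (s : Finset ι) (f : ι → ℝ → ℝ)
    (h : ∀ i ∈ s, ConvexOn ℝ Set.univ (f i)) :
    ConvexOn ℝ Set.univ (fun x => ∑ i ∈ s, f i x) := by
  classical
  induction s using Finset.induction with
  | empty => simpa using convexOn_const 0 convex_univ
  | insert a s ha ih =>
    simp only [Finset.sum_insert ha]
    exact (h _ (Finset.mem_insert_self _ _)).add
      (ih fun i hi => h i (Finset.mem_insert_of_mem hi))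

/-- Convexity of the negative log-likelihood (Proposition 1 of the paper, scalar
parameter): for a finite family of hazard functions `H i` satisfying the conditions
of Eq. 2 and binary contagion indicators `c i ∈ {0, 1}`, the map
`β ↦ -∑ i, (c i * log (H i β) + (1 - c i) * log (1 - H i β))` is convex on `ℝ`. -/
theorem neg_log_likelihood_convex {ι : Type*} (I : Finset ι)
    (c : ι → ℝ) (hc : ∀ i ∈ I, c i = 0 ∨ c i = 1)
    (H : ι → ℝ → ℝ)
    (hH : ∀ i ∈ I, ∀ β : ℝ, DifferentiableAt ℝ (H i) β)
    (hH' : ∀ i ∈ I, ∀ β : ℝ, DifferentiableAt ℝ (deriv (H i)) β)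
    (hpos : ∀ i ∈ I, ∀ β : ℝ, 0 < H i β) (hlt : ∀ i ∈ I, ∀ β : ℝ, H i β < 1)
    (hineq1 : ∀ i ∈ I, ∀ β : ℝ, (deriv (H i) β) ^ 2 ≥ deriv (deriv (H i)) β * H i β)
    (hineq2 : ∀ i ∈ I, ∀ β : ℝ,
      (deriv (H i) β) ^ 2 ≥ -(deriv (deriv (H i)) β) * (1 - H i β)) :
    ConvexOn ℝ Set.univ
      (fun β : ℝ =>
        -∑ i ∈ I, (c i * Real.log (H i β) + (1 - c i) * Real.log (1 - H i β))) := by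
  have key : ∀ i ∈ I, ConvexOn ℝ Set.univ
      (fun β : ℝ => -(c i * Real.log (H i β) + (1 - c i) * Real.log (1 - H i β))) := by
    intro i hi
    rcases hc i hi with h0 | h1
    · have : (fun β : ℝ => -(c i * Real.log (H i β) + (1 - c i) * Real.log (1 - H i β)))
          = fun β => -Real.log ((fun β => 1 - H i β) β) := by
        funext β; rw [h0]; ring
      rw [this]
      apply neg_log_convex_aux
      · intro β; exact (differentiableAt_const 1).sub (hH i hi β)
      · intro β
        have hder : deriv (fun β => 1 - H i β) = fun β => -deriv (H i) β := by
          funext x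
          rw [deriv_const_sub]
        rw [hder]
        exact (hH' i hi β).neg
      · intro β; linarith [hlt i hi β]
      · intro β
        have hder : deriv (fun β => 1 - H i β) = fun β => -deriv (H i) β := by
          funext x; rw [deriv_const_sub]
        rw [hder]
        have hder2 : deriv (fun β => -deriv (H i) β) β = -deriv (deriv (H i)) β := by
          exact (hH' i hi β).hasDerivAt.neg.deriv
        rw [hder2, neg_pow]
        simpa using hineq2 i hi β
    · have : (fun β : ℝ => -(c i * Real.log (H i β) + (1 - c i) * Real.log (1 - H i β)))
          = fun β => -Real.log (H i β) := by
        funext β; rw [h1]; ring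
      rw [this]
      exact neg_log_convex_aux (H i) (hH i hi) (hH' i hi) (hpos i hi) (hineq1 i hi)
  have : (fun β : ℝ =>
      -∑ i ∈ I, (c i * Real.log (H i β) + (1 - c i) * Real.log (1 - H i β)))
      = fun β : ℝ => ∑ i ∈ I,
        (fun j => fun β : ℝ => -(c j * Real.log (H j β) + (1 - c j) * Real.log (1 - H j β))) i β := by
    funext β; exact (Finset.sum_neg_distrib _).symm
  rw [this]
  exact sum_convexOn I _ key
end

section
/- Let n ≥ 1, let I be a finite index set, and for each i ∈ I let c_i ∈ {0,1}, a_i ∈ ℝⁿ with all coordinates nonnegative, and b_i ∈ ℝ; define H_i(β) = exp(-(⟨a_i, β⟩ + b_i)). Then the negative log-likelihood β ↦ ∑_{i ∈ I} [ c_i · (⟨a_i, β⟩ + b_i) - (1 - c_i) · log(1 - H_i(β)) ] is convex on the convex set {β ∈ ℝⁿ : ⟨a_i, β⟩ + b_i > 0 for all i ∈ I}. -/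
private lemma exp_neg_lt_one {x : ℝ} (hx : 0 < x) : Real.exp (-x) < 1 := by
  rw [Real.exp_lt_one_iff]; linarith

private lemma one_sub_exp_neg_pos {x : ℝ} (hx : 0 < x) : 0 < 1 - Real.exp (-x) := by
  have := exp_neg_lt_one hx; linarith

/-- `x ↦ -log (1 - exp (-x))` is convex on `(0, ∞)`. -/
private lemma g_convex :
    ConvexOn ℝ (Set.Ioi (0 : ℝ)) (fun x => -Real.log (1 - Real.exp (-x))) := by
  have hD : Convex ℝ (Set.Ioi (0 : ℝ)) := convex_Ioi 0
  have hderiv1 : ∀ x ∈ Set.Ioi (0 : ℝ),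
      HasDerivAt (fun x => -Real.log (1 - Real.exp (-x)))
        (-(Real.exp (-x) / (1 - Real.exp (-x)))) x := by
    intro x hx
    have hx0 : (0 : ℝ) < x := hx
    have hne : 1 - Real.exp (-x) ≠ 0 := ne_of_gt (one_sub_exp_neg_pos hx0)
    have hu : HasDerivAt (fun x : ℝ => 1 - Real.exp (-x)) (Real.exp (-x)) x := by
      have h1 : HasDerivAt (fun x : ℝ => Real.exp (-x)) (-Real.exp (-x)) x := by
        have := (Real.hasDerivAt_exp (-x)).comp x (hasDerivAt_neg x)
        simpa [mul_comm, Function.comp_def] using this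
      have := (hasDerivAt_const x (1 : ℝ)).sub h1
      simpa [Pi.sub_def] using this
    have := (hu.log hne).neg
    simpa [Pi.neg_def] using this
  have hderiv2 : ∀ x ∈ Set.Ioi (0 : ℝ),
      HasDerivAt (fun x => -(Real.exp (-x) / (1 - Real.exp (-x))))
        (Real.exp (-x) / (1 - Real.exp (-x)) ^ 2) x := by
    intro x hx
    have hx0 : (0 : ℝ) < x := hx
    have hne : 1 - Real.exp (-x) ≠ 0 := ne_of_gt (one_sub_exp_neg_pos hx0)
    have hu : HasDerivAt (fun x : ℝ => Real.exp (-x)) (-Real.exp (-x)) x := by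
      have := (Real.hasDerivAt_exp (-x)).comp x (hasDerivAt_neg x)
      simpa [mul_comm, Function.comp_def] using this
    have hv : HasDerivAt (fun x : ℝ => 1 - Real.exp (-x)) (Real.exp (-x)) x := by
      have := (hasDerivAt_const x (1 : ℝ)).sub hu
      simpa [Pi.sub_def] using this
    have := ((hu.div hv hne)).neg
    refine this.congr_deriv ?_
    ring
  have hcont : ContinuousOn (fun x => -Real.log (1 - Real.exp (-x))) (Set.Ioi (0 : ℝ)) :=
    fun x hx => ((hderiv1 x hx).continuousAt).continuousWithinAt
  refine convexOn_of_hasDerivWithinAt2_nonneg hD hcont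
    (f' := fun x => -(Real.exp (-x) / (1 - Real.exp (-x))))
    (f'' := fun x => Real.exp (-x) / (1 - Real.exp (-x)) ^ 2) ?_ ?_ ?_
  · intro x hx
    rw [interior_Ioi] at hx
    exact (hderiv1 x hx).hasDerivWithinAt
  · intro x hx
    rw [interior_Ioi] at hx
    exact (hderiv2 x hx).hasDerivWithinAt
  · intro x hx
    positivity

private lemma myConvexOn_sum {ι : Type*} {E : Type*} [AddCommGroup E] [Module ℝ E]
    {s : Set E} (hs : Convex ℝ s) (t : Finset ι) (f : ι → E → ℝ)
    (h : ∀ i ∈ t, ConvexOn ℝ s (f i)) : ConvexOn ℝ s (fun x => ∑ i ∈ t, f i x) := by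
  classical
  induction t using Finset.induction_on with
  | empty => simpa using convexOn_const 0 hs
  | insert j u hnotmem ih =>
    simp only [Finset.sum_insert hnotmem]
    exact (h j (Finset.mem_insert_self j u)).add
      (ih fun i hi => h i (Finset.mem_insert_of_mem hi))

/-- Proposition 1 of the paper instantiated on the InterRate kernel families:
for log-linear hazard kernels `H i β = exp (-(⟨a i, β⟩ + b i))` with nonnegative
coefficient vectors `a i` and binary contagion indicators `c i ∈ {0, 1}`, the
negative log-likelihood
`β ↦ ∑ i, (c i * (⟨a i, β⟩ + b i) - (1 - c i) * log (1 - H i β))`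
is convex on the convex set `{β : ∀ i ∈ I, ⟨a i, β⟩ + b i > 0}`. -/
theorem interrate_neg_log_likelihood_convex (n : ℕ) (hn : 1 ≤ n)
    {ι : Type*} (I : Finset ι)
    (c : ι → ℝ) (hc : ∀ i ∈ I, c i = 0 ∨ c i = 1)
    (a : ι → Fin n → ℝ) (ha : ∀ i ∈ I, ∀ j, 0 ≤ a i j) (b : ι → ℝ)
    (H : ι → (Fin n → ℝ) → ℝ)
    (hHdef : ∀ i ∈ I, ∀ β : Fin n → ℝ, H i β = Real.exp (-(∑ j, a i j * β j + b i))) :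
    Convex ℝ {β : Fin n → ℝ | ∀ i ∈ I, 0 < ∑ j, a i j * β j + b i} ∧
    ConvexOn ℝ {β : Fin n → ℝ | ∀ i ∈ I, 0 < ∑ j, a i j * β j + b i}
      (fun β : Fin n → ℝ =>
        ∑ i ∈ I,
          (c i * (∑ j, a i j * β j + b i) - (1 - c i) * Real.log (1 - H i β))) := by
  set L : ι → (Fin n → ℝ) → ℝ := fun i β => ∑ j, a i j * β j + b i with hL
  set S : Set (Fin n → ℝ) := {β : Fin n → ℝ | ∀ i ∈ I, 0 < ∑ j, a i j * β j + b i} with hS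
  -- the affine map identity
  have hLaff : ∀ i (β γ : Fin n → ℝ) (t s : ℝ), t + s = 1 →
      L i (t • β + s • γ) = t * L i β + s * L i γ := by
    intro i β γ t s hts
    simp only [L, Pi.add_apply, Pi.smul_apply, smul_eq_mul]
    have : ∑ j, a i j * (t * β j + s * γ j)
        = t * ∑ j, a i j * β j + s * ∑ j, a i j * γ j := by
      rw [Finset.mul_sum, Finset.mul_sum, ← Finset.sum_add_distrib]
      exact Finset.sum_congr rfl fun j _ => by ring
    rw [this]
    have hb : b i = (t + s) * b i := by rw [hts]; ring
    nlinarith [hb]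
  have hconv : Convex ℝ S := by
    intro β hβ γ hγ t s ht hs hts
    intro i hi
    have h1 : 0 < L i β := hβ i hi
    have h2 : 0 < L i γ := hγ i hi
    have := hLaff i β γ t s hts
    show 0 < L i (t • β + s • γ)
    rw [this]
    rcases ht.eq_or_lt with h | h
    · rw [← h]; simp only [zero_mul, zero_add]
      have hs1 : s = 1 := by linarith
      rw [hs1, one_mul]; exact h2
    · have : 0 ≤ s * L i γ := mul_nonneg hs h2.le
      have : 0 < t * L i β := mul_pos h h1
      linarith
  refine ⟨hconv, ?_⟩
  -- convexity of each term
  have hterm : ∀ i ∈ I, ConvexOn ℝ S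
      (fun β => c i * L i β - (1 - c i) * Real.log (1 - H i β)) := by
    intro i hi
    have hrw : ∀ β : Fin n → ℝ,
        c i * L i β - (1 - c i) * Real.log (1 - H i β)
          = c i * L i β + (1 - c i) * (-Real.log (1 - Real.exp (-(L i β)))) := by
      intro β
      rw [hHdef i hi β]
      ring
    have h1 : ConvexOn ℝ S (fun β => c i * L i β) := by
      have haff : ConvexOn ℝ S (fun β => L i β) := by
        refine ⟨hconv, ?_⟩
        intro β hβ γ hγ t s ht hs hts
        exact le_of_eq (hLaff i β γ t s hts)
      have hc0 : 0 ≤ c i := by rcases hc i hi with h | h <;> rw [h] <;> norm_num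
      simpa [smul_eq_mul] using haff.smul hc0
    have h2 : ConvexOn ℝ S (fun β => (1 - c i) * (-Real.log (1 - Real.exp (-(L i β))))) := by
      have hcomp : ConvexOn ℝ S (fun β => -Real.log (1 - Real.exp (-(L i β)))) := by
        refine ⟨hconv, ?_⟩
        intro β hβ γ hγ t s ht hs hts
        have h1 : L i β ∈ Set.Ioi (0 : ℝ) := hβ i hi
        have h2 : L i γ ∈ Set.Ioi (0 : ℝ) := hγ i hi
        have := g_convex.2 h1 h2 ht hs hts
        simpa [hLaff i β γ t s hts, smul_eq_mul] using this
      have hc1 : 0 ≤ 1 - c i := by rcases hc i hi with h | h <;> rw [h] <;> norm_num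
      simpa [smul_eq_mul] using hcomp.smul hc1
    have := h1.add h2
    exact ConvexOn.congr this fun β _ => (hrw β).symm
  -- sum
  exact myConvexOn_sum hconv I _ hterm
end
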